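/- For unit vectors u_1,...,u_M in R^N with M > N, the coherence μ = max_{i≠j} |⟨u_i, u_j⟩| satisfies the Welch bound μ ≥ sqrt((M - N)/(N(M - 1))). -/

import Mathlib

open scoped RealInnerProductSpace

private lemma sum_swap4 {α β : Type*} [Fintype α] [Fintype β]
    (g : α → α → β → β → ℝ) :
    ∑ i, ∑ j, ∑ a, ∑ b, g i j a b = ∑ a, ∑ b, ∑ i, ∑ j, g i j a b :=
  calc ∑ i, ∑ j, ∑ a, ∑ b, g i j a b
      = ∑ i, ∑ a, ∑ j, ∑ b, g i j a b :=
        Finset.sum_congr rfl fun i _ => Finset.sum_comm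
    _ = ∑ a, ∑ i, ∑ j, ∑ b, g i j a b := Finset.sum_comm
    _ = ∑ a, ∑ i, ∑ b, ∑ j, g i j a b :=
        Finset.sum_congr rfl fun a _ => Finset.sum_congr rfl fun i _ => Finset.sum_comm
    _ = ∑ a, ∑ b, ∑ i, ∑ j, g i j a b :=
        Finset.sum_congr rfl fun a _ => Finset.sum_comm

/-- Welch bound: for `M` unit vectors in `ℝ^N` with `N < M`, the coherence
`μ = max_{i ≠ j} |⟨u i, u j⟩|` satisfies `μ ≥ sqrt((M - N)/(N(M-1)))`. -/
theorem welch_bound (N M : ℕ) (hN : 0 < N) (hNM : N < M)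
    (u : Fin M → EuclideanSpace ℝ (Fin N)) (hu : ∀ i, ‖u i‖ = 1)
    (μ : ℝ)
    (hμ : IsGreatest {x : ℝ | ∃ i j : Fin M, i ≠ j ∧ x = |⟪u i, u j⟫|} μ) :
    Real.sqrt (((M : ℝ) - N) / (N * ((M : ℝ) - 1))) ≤ μ := by
  have hM2 : 2 ≤ M := lt_of_le_of_lt hN hNM
  have hMR : (1:ℝ) < M := by exact_mod_cast lt_of_lt_of_le one_lt_two hM2
  have hNR : (0:ℝ) < N := by exact_mod_cast hN
  have hinner : ∀ i j : Fin M, ⟪u i, u j⟫ = ∑ a, u i a * u j a := by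
    intro i j; simp [PiLp.inner_apply, RCLike.inner_apply]
    exact Finset.sum_congr rfl fun _ _ => mul_comm _ _
  have hone : ∀ i : Fin M, ∑ a : Fin N, u i a * u i a = 1 := by
    intro i
    have := hinner i i
    rw [real_inner_self_eq_norm_sq, hu i] at this
    simpa using this.symm
  -- μ ≥ 0
  have hμ0 : 0 ≤ μ := by
    have h01 : (⟨0, by omega⟩ : Fin M) ≠ (⟨1, by omega⟩ : Fin M) := by
      simp [Fin.ext_iff]
    have := hμ.2 ⟨_, _, h01, rfl⟩
    exact le_trans (abs_nonneg _) this
  -- total sum of squared inner products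
  set S := ∑ i : Fin M, ∑ j : Fin M, (⟪u i, u j⟫ : ℝ)^2 with hSdef
  -- S as sum over matrix entries
  have hS : S = ∑ a : Fin N, ∑ b : Fin N, (∑ i, u i a * u i b)^2 := by
    have L : S = ∑ i : Fin M, ∑ j : Fin M, ∑ a : Fin N, ∑ b : Fin N,
        (u i a * u i b) * (u j a * u j b) := by
      simp only [hSdef, hinner, sq, Finset.sum_mul_sum]
      refine Finset.sum_congr rfl fun i _ => Finset.sum_congr rfl fun j _ =>
        Finset.sum_congr rfl fun a _ => Finset.sum_congr rfl fun b _ => by ring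
    have R : ∑ a : Fin N, ∑ b : Fin N, (∑ i, u i a * u i b)^2
        = ∑ a : Fin N, ∑ b : Fin N, ∑ i : Fin M, ∑ j : Fin M,
        (u i a * u i b) * (u j a * u j b) := by
      simp only [sq, Finset.sum_mul_sum]
    rw [L, R, sum_swap4 (fun i j a b => (u i a * u i b) * (u j a * u j b))]
  -- trace = M
  have htr : ∑ a : Fin N, (∑ i, u i a * u i a) = (M : ℝ) := by
    rw [Finset.sum_comm]
    simp [hone]
  -- Cauchy-Schwarz: M² ≤ N * S
  have hCS : (M:ℝ)^2 ≤ N * S := by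
    have h1 : ((M:ℝ))^2 ≤ (N:ℝ) * ∑ a : Fin N, (∑ i, u i a * u i a)^2 := by
      have := sq_sum_le_card_mul_sum_sq (s := (Finset.univ : Finset (Fin N)))
        (f := fun a => ∑ i, u i a * u i a)
      rw [htr] at this
      simpa using this
    refine h1.trans (mul_le_mul_of_nonneg_left ?_ hNR.le)
    rw [hS]
    exact Finset.sum_le_sum fun a _ =>
      Finset.single_le_sum (f := fun b => (∑ i, u i a * u i b)^2)
        (fun b _ => sq_nonneg _) (Finset.mem_univ a)
  -- split S into diagonal and off-diagonal
  have hsplit : S = (M:ℝ) + ∑ p ∈ (Finset.univ : Finset (Fin M)).offDiag, (⟪u p.1, u p.2⟫ : ℝ)^2 := by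
    rw [hSdef, ← Finset.sum_product', ← Finset.diag_union_offDiag,
      Finset.sum_union (Finset.disjoint_diag_offDiag _), Finset.sum_diag]
    congr 1
    have hdiag : ∀ i : Fin M, (⟪u i, u i⟫ : ℝ)^2 = 1 := fun i => by
      rw [hinner, hone i]; norm_num
    rw [Finset.sum_congr rfl fun i _ => hdiag i]
    simp
  -- off-diagonal bound
  have hoff : ∑ p ∈ (Finset.univ : Finset (Fin M)).offDiag, (⟪u p.1, u p.2⟫ : ℝ)^2
      ≤ (M : ℝ) * ((M:ℝ) - 1) * μ^2 := by
    have hcard : ((Finset.univ : Finset (Fin M)).offDiag.card : ℝ) = (M:ℝ) * ((M:ℝ) - 1) := by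
      have h1 : (Finset.univ : Finset (Fin M)).offDiag.card = M * M - M := by
        rw [Finset.offDiag_card]; simp
      rw [h1, Nat.cast_sub (Nat.le_mul_of_pos_left M (by omega))]
      push_cast; ring
    calc ∑ p ∈ (Finset.univ : Finset (Fin M)).offDiag, (⟪u p.1, u p.2⟫ : ℝ)^2
        ≤ ∑ _p ∈ (Finset.univ : Finset (Fin M)).offDiag, μ^2 := by
          refine Finset.sum_le_sum fun p hp => ?_
          rw [Finset.mem_offDiag] at hp
          have hb : |⟪u p.1, u p.2⟫| ≤ μ := hμ.2 ⟨p.1, p.2, hp.2.2, rfl⟩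
          calc (⟪u p.1, u p.2⟫ : ℝ)^2 = |⟪u p.1, u p.2⟫|^2 := (sq_abs _).symm
            _ ≤ μ^2 := pow_le_pow_left₀ (abs_nonneg _) hb 2
      _ = (M:ℝ) * ((M:ℝ) - 1) * μ^2 := by rw [Finset.sum_const, nsmul_eq_mul, hcard]
  -- combine
  have hkey : ((M : ℝ) - N) / (N * ((M : ℝ) - 1)) ≤ μ^2 := by
    rw [div_le_iff₀ (by nlinarith)]
    have hMN : (N:ℝ) < M := by exact_mod_cast hNM
    nlinarith [hCS, hsplit, hoff]
  calc Real.sqrt (((M : ℝ) - N) / (N * ((M : ℝ) - 1)))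
      ≤ Real.sqrt (μ^2) := Real.sqrt_le_sqrt hkey
    _ = μ := by rw [Real.sqrt_sq hμ0]
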